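/- For every natural number n, S_n(x) = (−i)^n · Σ_{σ ∈ 𝔖_n} (i x)^{cyco(σ)}, where cyco(σ) is the number of cycles of odd length in the permutation σ. -/

import Mathlib

open Equiv Equiv.Perm Finset

namespace StmtAux2

variable {α : Type*} [DecidableEq α] [Fintype α]

lemma cycleOf_conj' (π σ : Perm α) (a : α) :
    Perm.cycleOf (π * σ * π⁻¹) (π a) = π * Perm.cycleOf σ a * π⁻¹ := by
  ext y
  simp only [Perm.mul_apply, Perm.cycleOf_apply, sameCycle_conj, (fun z => π.symm_apply_apply z : ∀ z, π⁻¹ (π z) = z),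
    apply_ite π]
  simp only [Perm.inv_def, Equiv.symm_apply_apply]
  split_ifs with h
  · rfl
  · exact (Equiv.apply_symm_apply π y).symm

/-- Inserting the fixed point `x` into the cycle of `a`. -/
lemma insert_core {σ : Perm α} {x a : α} (hx : σ x = x) (ha : σ a ≠ a) :
    IsCycle (swap x a * σ.cycleOf a) ∧
      (swap x a * σ.cycleOf a).support = insert x (σ.cycleOf a).support ∧
      (swap x a * σ.cycleOf a).support.card = (σ.cycleOf a).support.card + 1 := by
  have hmem : a ∈ σ.support := Perm.mem_support.mpr ha
  have hxs : x ∉ σ.support := by simp [Perm.notMem_support, hx]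
  set l := σ.toList a with hl
  have hform : l.formPerm = σ.cycleOf a := Equiv.Perm.formPerm_toList σ a
  have hnd : l.Nodup := Equiv.Perm.nodup_toList σ a
  have hlen : l.length = (σ.cycleOf a).support.card := Equiv.Perm.length_toList σ a
  have two_le : 2 ≤ l.length :=
    Equiv.Perm.two_le_length_toList_iff_mem_support.mpr hmem
  have hxnot : x ∉ l := by
    intro hmem'
    have h1 : Perm.SameCycle σ a x ∧ a ∈ σ.support := Equiv.Perm.mem_toList_iff.mp hmem'
    have : x ∈ (σ.cycleOf a).support :=
      Equiv.Perm.mem_support_cycleOf_iff.mpr ⟨h1.1, h1.2⟩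
    exact hxs (Equiv.Perm.support_cycleOf_le σ a this)
  obtain ⟨y, z, l', heq⟩ : ∃ y z l', l = y :: z :: l' := by
    rcases l with _ | ⟨y, _ | ⟨z, l'⟩⟩
    · simp at two_le
    · simp at two_le
    · exact ⟨y, z, l', rfl⟩
  have hy : y = a := by
    have h0 := Equiv.Perm.toList_getElem_zero σ a hmem
    have heq' : σ.toList a = y :: z :: l' := by rw [← hl]; exact heq
    simp only [heq', List.getElem_cons_zero] at h0
    simpa using h0
  rw [hy] at heq
  have hkey : swap x a * σ.cycleOf a = (x :: l).formPerm := by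
    rw [heq, List.formPerm_cons_cons, ← heq, hform]
  have hnd' : (x :: l).Nodup := List.nodup_cons.mpr ⟨hxnot, hnd⟩
  have two_le' : 2 ≤ (x :: l).length := by rw [List.length_cons]; omega
  have hsupp : (swap x a * σ.cycleOf a).support = (x :: l).toFinset := by
    rw [hkey]
    apply List.support_formPerm_of_nodup _ hnd'
    intro w hw
    have hlw := congrArg List.length hw
    rw [List.length_cons, List.length_singleton] at hlw
    omega
  have hsuppl : (σ.cycleOf a).support = l.toFinset := by
    rw [← hform]
    apply List.support_formPerm_of_nodup _ hnd
    intro w hw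
    have hlw := congrArg List.length hw
    rw [List.length_singleton] at hlw
    omega
  refine ⟨?_, ?_, ?_⟩
  · rw [hkey]; exact List.isCycle_formPerm hnd' two_le'
  · rw [hsupp, hsuppl]; simp
  · rw [hsupp, hsuppl, List.toFinset_card_of_nodup hnd', List.toFinset_card_of_nodup hnd]
    simp

/-- Multiplying by `swap x a` where `x` is fixed and `a` is moved by `σ`. -/
lemma cycleType_swap_mul_moved {σ : Perm α} {x a : α} (hx : σ x = x) (hxa : x ≠ a)
    (ha : σ a ≠ a) :
    (swap x a * σ).cycleType =
      ((σ.cycleOf a).support.card + 1) ::ₘ σ.cycleType.erase (σ.cycleOf a).support.card ∧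
    ((swap x a * σ).cycleOf x).support.card = (σ.cycleOf a).support.card + 1 := by
  have hmem : a ∈ σ.support := Perm.mem_support.mpr ha
  have hxs : x ∉ σ.support := by simp [Perm.notMem_support, hx]
  set c := σ.cycleOf a with hc
  set k := c.support.card with hk
  have hcf : c ∈ σ.cycleFactorsFinset := Perm.cycleOf_mem_cycleFactorsFinset_iff.mpr hmem
  have hccyc : IsCycle c := (Perm.mem_cycleFactorsFinset_iff.mp hcf).1
  obtain ⟨hcyc', hsupp', hcard'⟩ := insert_core hx ha
  set c' := swap x a * c with hc'
  set d := σ * c⁻¹ with hd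
  have hdc : Perm.Disjoint d c := Perm.disjoint_mul_inv_of_mem_cycleFactorsFinset hcf
  have hσ : σ = d * c := by rw [hd, inv_mul_cancel_right]
  have hax : a ∈ c.support := by
    rw [hc]; exact Perm.mem_support_cycleOf_iff.mpr ⟨Perm.SameCycle.refl _ _, hmem⟩
  have hxc : x ∉ c.support := fun h => hxs (Perm.support_cycleOf_le σ a h)
  have hdx : d x = x := by
    have hcx : c⁻¹ x = x := by
      rw [← Perm.notMem_support, Perm.support_inv]; exact hxc
    rw [hd, Perm.mul_apply, hcx, hx]
  have hda : d a = a := by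
    rcases hdc a with h | h
    · exact h
    · exact absurd h (by rwa [hc, Perm.cycleOf_apply_self])
  have hdfix : ∀ y ∈ c'.support, d y = y := by
    intro y hy
    rw [hsupp', Finset.mem_insert] at hy
    rcases hy with rfl | hy
    · exact hdx
    · rcases hdc y with h | h
      · exact h
      · exact absurd h (Perm.mem_support.mp hy)
  have hswapd : Perm.Disjoint (swap x a) d := by
    intro y
    by_cases hyx : y = x
    · subst hyx; exact Or.inr hdx
    by_cases hya : y = a
    · subst hya; exact Or.inr hda
    · exact Or.inl (swap_apply_of_ne_of_ne hyx hya)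
  have hmain : swap x a * σ = d * c' := by
    rw [hσ, ← mul_assoc, hswapd.commute.eq, mul_assoc]
  have hdisj' : Perm.Disjoint d c' := by
    intro y
    by_cases hy : y ∈ c'.support
    · exact Or.inl (hdfix y hy)
    · exact Or.inr (Perm.notMem_support.mp hy)
  have hctc' : c'.cycleType = {k + 1} := by
    rw [hcyc'.cycleType, hcard']
  have hctd : d.cycleType = σ.cycleType.erase k := by
    rw [hd, Perm.cycleType_mul_inv_mem_cycleFactorsFinset_eq_sub hcf, hccyc.cycleType]
    rw [← hk]
    rw [Multiset.sub_singleton]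
  constructor
  · rw [hmain, hdisj'.cycleType_mul, hctc', hctd, add_comm, ← Multiset.singleton_add]
  · have hc'f : c' ∈ (d * c').cycleFactorsFinset := by
      rw [Perm.mem_cycleFactorsFinset_iff]
      refine ⟨hcyc', fun y hy => ?_⟩
      exact (hdfix (c' y) (Perm.apply_mem_support.mpr hy)).symm
    have hxc' : x ∈ c'.support := by rw [hsupp']; exact Finset.mem_insert_self _ _
    have := Perm.cycle_is_cycleOf hxc' hc'f
    rw [hmain, ← this, hcard']

/-- Multiplying by `swap x a` where both `x` and `a` are fixed by `σ`. -/
lemma cycleType_swap_mul_fixed {σ : Perm α} {x a : α} (hx : σ x = x) (hxa : x ≠ a)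
    (ha : σ a = a) :
    (swap x a * σ).cycleType = 2 ::ₘ σ.cycleType ∧
    ((swap x a * σ).cycleOf x).support.card = 2 := by
  have hdisj : Perm.Disjoint (swap x a) σ := by
    intro y
    by_cases hyx : y = x
    · subst hyx; exact Or.inr hx
    by_cases hya : y = a
    · subst hya; exact Or.inr ha
    · exact Or.inl (swap_apply_of_ne_of_ne hyx hya)
  have hsw : (swap x a).cycleType = {2} := by
    rw [(isCycle_swap hxa).cycleType, card_support_swap hxa]
  constructor
  · rw [hdisj.cycleType_mul, hsw, ← Multiset.singleton_add]
  · have hf : swap x a ∈ (swap x a * σ).cycleFactorsFinset := by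
      rw [Perm.mem_cycleFactorsFinset_iff]
      refine ⟨isCycle_swap hxa, fun y hy => ?_⟩
      have : σ y = y := by
        rcases hdisj y with h | h
        · exact absurd h (Perm.mem_support.mp hy)
        · exact h
      show (swap x a) y = (swap x a) (σ y)
      rw [this]
    have hxsw : x ∈ (swap x a).support := by
      rw [Perm.mem_support, swap_apply_left]; exact Ne.symm hxa
    have := Perm.cycle_is_cycleOf hxsw hf
    rw [← this, card_support_swap hxa]

end StmtAux2
section FinLevel

open Equiv Equiv.Perm Finset

namespace StmtAux2

/-- `Fin n` is equivalent to the nonzero elements of `Fin (n+1)`. -/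
def finSuccNe (n : ℕ) : Fin n ≃ {x : Fin (n + 1) // x ≠ 0} where
  toFun b := ⟨b.succ, Fin.succ_ne_zero b⟩
  invFun x := x.1.pred x.2
  left_inv b := by simp
  right_inv x := by simp

lemma decompose_zero_eq (n : ℕ) (τ : Perm (Fin n)) :
    Equiv.Perm.decomposeFin.symm (0, τ) = τ.extendDomain (finSuccNe n) := by
  apply Equiv.ext
  intro i
  refine Fin.cases ?_ (fun b => ?_) i
  · rw [Equiv.Perm.decomposeFin_symm_apply_zero]
    rw [Perm.extendDomain_apply_not_subtype]
    simp
  · rw [Equiv.Perm.decomposeFin_symm_apply_succ]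
    rw [Equiv.swap_self, Equiv.refl_apply]
    rw [Perm.extendDomain_apply_subtype τ (finSuccNe n) (Fin.succ_ne_zero b)]
    simp [finSuccNe]

lemma cycleType_decompose_zero (n : ℕ) (τ : Perm (Fin n)) :
    (Equiv.Perm.decomposeFin.symm (0, τ)).cycleType = τ.cycleType := by
  rw [decompose_zero_eq, Equiv.Perm.cycleType_extendDomain]

lemma decompose_zero_apply_succ (n : ℕ) (τ : Perm (Fin n)) (b : Fin n) :
    Equiv.Perm.decomposeFin.symm (0, τ) b.succ = (τ b).succ := by
  rw [Equiv.Perm.decomposeFin_symm_apply_succ, Equiv.swap_self, Equiv.refl_apply]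

lemma decompose_eq (n : ℕ) (p : Fin (n + 1)) (τ : Perm (Fin n)) :
    Equiv.Perm.decomposeFin.symm (p, τ) =
      swap 0 p * Equiv.Perm.decomposeFin.symm (0, τ) := by
  apply Equiv.ext
  intro i
  refine Fin.cases ?_ (fun b => ?_) i
  · rw [Equiv.Perm.decomposeFin_symm_apply_zero, Perm.mul_apply,
      Equiv.Perm.decomposeFin_symm_apply_zero, swap_apply_left]
  · rw [Equiv.Perm.decomposeFin_symm_apply_succ, Perm.mul_apply, decompose_zero_apply_succ]

lemma cycleOf_card_decompose_zero (n : ℕ) (τ : Perm (Fin n)) (b : Fin n) (hb : τ b ≠ b) :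
    ((Equiv.Perm.decomposeFin.symm (0, τ)).cycleOf b.succ).support.card
      = (τ.cycleOf b).support.card := by
  set σ0 := Equiv.Perm.decomposeFin.symm (0, τ) with hσ0
  have happ : ∀ c : Fin n, σ0 c.succ = (τ c).succ := decompose_zero_apply_succ n τ
  have hz : σ0 0 = 0 := Equiv.Perm.decomposeFin_symm_apply_zero 0 τ
  have hsc : ∀ c : Fin n, σ0.SameCycle b.succ c.succ ↔ τ.SameCycle b c := by
    intro c
    have h1 : ((finSuccNe n) b : Fin (n + 1)) = b.succ := rfl
    have h2 : ((finSuccNe n) c : Fin (n + 1)) = c.succ := rfl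
    rw [hσ0, decompose_zero_eq, ← h1, ← h2]
    exact Equiv.Perm.sameCycle_extendDomain
  have hbs : b.succ ∈ σ0.support := by
    rw [Perm.mem_support, happ b]
    exact fun h => hb (Fin.succ_injective n h)
  have hset : (σ0.cycleOf b.succ).support
      = ((τ.cycleOf b).support).map ⟨Fin.succ, Fin.succ_injective n⟩ := by
    ext y
    refine Fin.cases ?_ (fun c => ?_) y
    · constructor
      · intro h
        have h0 : (0 : Fin (n + 1)) ∈ σ0.support :=
          Equiv.Perm.support_cycleOf_le σ0 b.succ h
        rw [Perm.mem_support] at h0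
        exact absurd hz h0
      · intro h
        rw [Finset.mem_map] at h
        obtain ⟨d, _, hd⟩ := h
        exact absurd hd (Fin.succ_ne_zero d)
    · rw [Equiv.Perm.mem_support_cycleOf_iff]
      constructor
      · rintro ⟨h1, _⟩
        rw [Finset.mem_map]
        refine ⟨c, ?_, rfl⟩
        rw [Equiv.Perm.mem_support_cycleOf_iff]
        exact ⟨(hsc c).mp h1, Perm.mem_support.mpr hb⟩
      · intro h
        rw [Finset.mem_map] at h
        obtain ⟨d, hd, hdc⟩ := h
        have hdc' : d = c := Fin.succ_injective n hdc
        subst hdc'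
        rw [Equiv.Perm.mem_support_cycleOf_iff] at hd
        exact ⟨(hsc d).mpr hd.1, hbs⟩
  rw [hset, Finset.card_map]

end StmtAux2
end FinLevel
section Counting

open Equiv Equiv.Perm Finset

namespace StmtAux2

/-- Number of odd cycles of a permutation of `Fin m`, counting fixed points as 1-cycles. -/
def oc {m : ℕ} (σ : Perm (Fin m)) : ℕ :=
  Multiset.card (σ.cycleType.filter (fun k => Odd k)) + (m - σ.cycleType.sum)

/-- Length of the cycle of `a` (1 if `a` is a fixed point). -/
def clen {m : ℕ} (σ : Perm (Fin m)) (a : Fin m) : ℕ :=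
  if σ a = a then 1 else (σ.cycleOf a).support.card

lemma sum_ct_le {m : ℕ} (σ : Perm (Fin m)) : σ.cycleType.sum ≤ m := by
  rw [Equiv.Perm.sum_cycleType]
  calc σ.support.card ≤ Finset.univ.card := Finset.card_le_univ _
    _ = m := by simp

lemma sum_ct_le_of_fixed {m : ℕ} (σ : Perm (Fin m)) (a : Fin m) (ha : σ a = a) :
    σ.cycleType.sum + 1 ≤ m := by
  rw [Equiv.Perm.sum_cycleType]
  have h1 : σ.support ⊆ Finset.univ.erase a := by
    intro y hy
    rw [Finset.mem_erase]
    refine ⟨?_, Finset.mem_univ y⟩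
    rintro rfl
    exact Perm.mem_support.mp hy ha
  have h2 := Finset.card_le_card h1
  rw [Finset.card_erase_of_mem (Finset.mem_univ a), Finset.card_univ, Fintype.card_fin] at h2
  have h3 : 0 < m := a.pos
  omega

lemma card_cycleOf_mem_cycleType {m : ℕ} (τ : Perm (Fin m)) (b : Fin m) (hb : τ b ≠ b) :
    (τ.cycleOf b).support.card ∈ τ.cycleType := by
  rw [Equiv.Perm.cycleType_def]
  exact Multiset.mem_map_of_mem _
    (Finset.mem_val.mpr (Perm.cycleOf_mem_cycleFactorsFinset_iff.mpr (Perm.mem_support.mpr hb)))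

lemma oc_decompose_zero (n : ℕ) (τ : Perm (Fin n)) :
    oc (Equiv.Perm.decomposeFin.symm (0, τ)) = oc τ + 1 := by
  unfold oc
  rw [cycleType_decompose_zero]
  have := sum_ct_le τ
  omega

lemma oc_clen_insert {n : ℕ} (τ : Perm (Fin n)) (b : Fin n) :
    (¬ Even (clen τ b) → oc (Equiv.Perm.decomposeFin.symm (b.succ, τ)) + 1 = oc τ)
    ∧ (Even (clen τ b) → oc (Equiv.Perm.decomposeFin.symm (b.succ, τ)) = oc τ + 1)
    ∧ clen (Equiv.Perm.decomposeFin.symm (b.succ, τ)) 0 = clen τ b + 1 := by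
  set σ0 := Equiv.Perm.decomposeFin.symm (0, τ) with hσ0
  have hz : σ0 0 = 0 := by rw [hσ0]; exact Equiv.Perm.decomposeFin_symm_apply_zero 0 τ
  have hct0 : σ0.cycleType = τ.cycleType := by rw [hσ0]; exact cycleType_decompose_zero n τ
  have hne : (0 : Fin (n + 1)) ≠ b.succ := (Fin.succ_ne_zero b).symm
  have he : Equiv.Perm.decomposeFin.symm (b.succ, τ) = swap 0 b.succ * σ0 := by
    rw [hσ0]; exact decompose_eq n b.succ τ
  have h00 : (swap 0 b.succ * σ0) 0 ≠ 0 := by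
    rw [Perm.mul_apply, hz, swap_apply_left]; exact Fin.succ_ne_zero b
  by_cases hb : τ b = b
  · -- b is a fixed point of τ
    have ha : σ0 b.succ = b.succ := by
      rw [hσ0, decompose_zero_apply_succ, hb]
    obtain ⟨hctE, hczE⟩ := cycleType_swap_mul_fixed hz hne ha
    rw [hct0] at hctE
    have hclen : clen τ b = 1 := by unfold clen; rw [if_pos hb]
    have hle := sum_ct_le_of_fixed τ b hb
    have hf : Multiset.filter (fun j => Odd j) ((2 : ℕ) ::ₘ τ.cycleType)
        = Multiset.filter (fun j => Odd j) τ.cycleType :=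
      Multiset.filter_cons_of_neg _ (by decide)
    have hs : ((2 : ℕ) ::ₘ τ.cycleType).sum = 2 + τ.cycleType.sum := Multiset.sum_cons _ _
    refine ⟨?_, ?_, ?_⟩
    · intro _
      unfold oc
      rw [he, hctE, hf, hs]
      omega
    · intro hE
      rw [hclen] at hE
      exact absurd hE (by decide)
    · rw [hclen]
      unfold clen
      rw [he, if_neg h00, hczE]
  · -- b is moved by τ
    have ha : σ0 b.succ ≠ b.succ := by
      rw [hσ0, decompose_zero_apply_succ]
      exact fun h => hb (Fin.succ_injective n h)
    obtain ⟨hctE, hczE⟩ := cycleType_swap_mul_moved hz hne ha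
    have hk : (σ0.cycleOf b.succ).support.card = (τ.cycleOf b).support.card := by
      rw [hσ0]; exact cycleOf_card_decompose_zero n τ b hb
    rw [hk] at hctE hczE
    rw [hct0] at hctE
    have hclen : clen τ b = (τ.cycleOf b).support.card := by unfold clen; rw [if_neg hb]
    have hKmem : (τ.cycleOf b).support.card ∈ τ.cycleType := card_cycleOf_mem_cycleType τ b hb
    have hrep : τ.cycleType
        = (τ.cycleOf b).support.card ::ₘ τ.cycleType.erase (τ.cycleOf b).support.card :=
      (Multiset.cons_erase hKmem).symm
    have hsum0 : τ.cycleType.sum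
        = (τ.cycleOf b).support.card + (τ.cycleType.erase (τ.cycleOf b).support.card).sum := by
      conv_lhs => rw [hrep]
      rw [Multiset.sum_cons]
    have hsum1 : (((τ.cycleOf b).support.card + 1)
          ::ₘ τ.cycleType.erase (τ.cycleOf b).support.card).sum
        = (τ.cycleOf b).support.card + 1
          + (τ.cycleType.erase (τ.cycleOf b).support.card).sum := Multiset.sum_cons _ _
    have hle := sum_ct_le τ
    by_cases hoK : Odd (τ.cycleOf b).support.card
    · have hf1 : Multiset.card (Multiset.filter (fun j => Odd j) τ.cycleType)
          = Multiset.card (Multiset.filter (fun j => Odd j)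
              (τ.cycleType.erase (τ.cycleOf b).support.card)) + 1 := by
        conv_lhs => rw [hrep]
        rw [Multiset.filter_cons_of_pos _ hoK, Multiset.card_cons]
      have hf2 : Multiset.card (Multiset.filter (fun j => Odd j)
            (((τ.cycleOf b).support.card + 1)
              ::ₘ τ.cycleType.erase (τ.cycleOf b).support.card))
          = Multiset.card (Multiset.filter (fun j => Odd j)
              (τ.cycleType.erase (τ.cycleOf b).support.card)) := by
        rw [Multiset.filter_cons_of_neg _ (Nat.not_odd_iff_even.mpr (Odd.add_one hoK))]
      refine ⟨?_, ?_, ?_⟩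
      · intro _
        unfold oc
        rw [he, hctE, hf2, hsum1]
        omega
      · intro hE
        rw [hclen] at hE
        exact absurd hoK (Nat.not_odd_iff_even.mpr hE)
      · rw [hclen]
        unfold clen
        rw [he, if_neg h00, hczE]
    · have hEK : Even (τ.cycleOf b).support.card := Nat.not_odd_iff_even.mp hoK
      have hf1 : Multiset.card (Multiset.filter (fun j => Odd j) τ.cycleType)
          = Multiset.card (Multiset.filter (fun j => Odd j)
              (τ.cycleType.erase (τ.cycleOf b).support.card)) := by
        conv_lhs => rw [hrep]
        rw [Multiset.filter_cons_of_neg _ hoK]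
      have hf2 : Multiset.card (Multiset.filter (fun j => Odd j)
            (((τ.cycleOf b).support.card + 1)
              ::ₘ τ.cycleType.erase (τ.cycleOf b).support.card))
          = Multiset.card (Multiset.filter (fun j => Odd j)
              (τ.cycleType.erase (τ.cycleOf b).support.card)) + 1 := by
        rw [Multiset.filter_cons_of_pos _ (Even.add_one hEK), Multiset.card_cons]
      refine ⟨?_, ?_, ?_⟩
      · intro hE
        rw [hclen] at hE
        exact absurd hEK hE
      · intro _
        unfold oc
        rw [he, hctE, hf2, hsum1]
        omega
      · rw [hclen]
        unfold clen
        rw [he, if_neg h00, hczE]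

end StmtAux2
end Counting
section Sums

open Equiv Equiv.Perm Finset

namespace StmtAux2

/-- The generating sum `∑_σ u^(number of odd cycles)`. -/
noncomputable def Asum (u : ℂ) (m : ℕ) : ℂ := ∑ σ : Perm (Fin m), u ^ oc σ

/-- Weight used in the double-counting argument. -/
def Vw (u : ℂ) {m : ℕ} (a : Fin m) (σ : Perm (Fin m)) : ℂ :=
  if Even (clen σ a) then u ^ (oc σ + 1) else u ^ (oc σ - 1)

lemma R1 (u : ℂ) (n : ℕ) :
    Asum u (n + 1) = u * Asum u n + ∑ b : Fin n, ∑ τ : Perm (Fin n), Vw u b τ := by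
  have h1 : Asum u (n + 1)
      = ∑ pτ : Fin (n + 1) × Perm (Fin n), u ^ oc (Equiv.Perm.decomposeFin.symm pτ) :=
    Fintype.sum_equiv Equiv.Perm.decomposeFin _ _
      (fun σ => by rw [Equiv.symm_apply_apply])
  rw [h1, Fintype.sum_prod_type, Fin.sum_univ_succ]
  congr 1
  · rw [Asum, Finset.mul_sum]
    apply Finset.sum_congr rfl
    intro τ _
    rw [oc_decompose_zero, pow_succ]
    ring
  · apply Finset.sum_congr rfl
    intro b _
    apply Finset.sum_congr rfl
    intro τ _
    obtain ⟨hodd, heven, _⟩ := oc_clen_insert τ b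
    unfold Vw
    by_cases hE : Even (clen τ b)
    · rw [if_pos hE, heven hE]
    · rw [if_neg hE]
      have h2 := hodd hE
      congr 1
      omega

lemma R2 (u : ℂ) (n : ℕ) :
    ∑ σ : Perm (Fin (n + 1)), Vw u 0 σ = ((n : ℂ) + 1) * Asum u n := by
  have h1 : ∑ σ : Perm (Fin (n + 1)), Vw u 0 σ
      = ∑ pτ : Fin (n + 1) × Perm (Fin n), Vw u 0 (Equiv.Perm.decomposeFin.symm pτ) :=
    Fintype.sum_equiv Equiv.Perm.decomposeFin _ _
      (fun σ => by rw [Equiv.symm_apply_apply])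
  have key : ∀ p : Fin (n + 1), ∀ τ : Perm (Fin n),
      Vw u 0 (Equiv.Perm.decomposeFin.symm (p, τ)) = u ^ oc τ := by
    intro p
    refine Fin.cases ?_ (fun b => ?_) p
    · intro τ
      have hz : Equiv.Perm.decomposeFin.symm ((0 : Fin (n + 1)), τ) 0 = 0 :=
        Equiv.Perm.decomposeFin_symm_apply_zero 0 τ
      have hc : clen (Equiv.Perm.decomposeFin.symm ((0 : Fin (n + 1)), τ)) 0 = 1 := by
        unfold clen; rw [if_pos hz]
      unfold Vw
      rw [hc, if_neg (by decide), oc_decompose_zero, Nat.add_sub_cancel]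
    · intro τ
      obtain ⟨hodd, heven, hclen⟩ := oc_clen_insert τ b
      unfold Vw
      rw [hclen]
      by_cases hE : Even (clen τ b)
      · rw [if_neg (by rw [Nat.even_add_one]; exact fun h => h hE), heven hE,
          Nat.add_sub_cancel]
      · rw [if_pos (Nat.even_add_one.mpr hE), ← hodd hE]
  have h2 : ∀ p : Fin (n + 1),
      ∑ τ : Perm (Fin n), Vw u 0 (Equiv.Perm.decomposeFin.symm (p, τ)) = Asum u n :=
    fun p => Finset.sum_congr rfl (fun τ _ => key p τ)
  rw [h1, Fintype.sum_prod_type, Finset.sum_congr rfl (fun p _ => h2 p),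
    Finset.sum_const, Finset.card_univ, Fintype.card_fin, nsmul_eq_mul]
  push_cast
  ring

lemma R3 (u : ℂ) (n : ℕ) (b : Fin (n + 1)) :
    ∑ σ : Perm (Fin (n + 1)), Vw u b σ = ∑ σ : Perm (Fin (n + 1)), Vw u 0 σ := by
  set π : Perm (Fin (n + 1)) := swap 0 b with hπ
  have hbij : Function.Bijective (fun σ : Perm (Fin (n + 1)) => π * σ * π⁻¹) :=
    (MulAut.conj π).bijective
  refine (Fintype.sum_bijective _ hbij _ _ ?_).symm
  intro σ
  have hπ0 : π 0 = b := swap_apply_left 0 b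
  have hoc : oc (π * σ * π⁻¹) = oc σ := by unfold oc; rw [Perm.cycleType_conj]
  have happ : (π * σ * π⁻¹) b = π (σ 0) := by
    rw [← hπ0, Perm.mul_apply, Perm.mul_apply, Perm.inv_def, Equiv.symm_apply_apply]
  have hfix : ((π * σ * π⁻¹) b = b) ↔ σ 0 = 0 := by
    rw [happ, ← hπ0]
    exact ⟨fun h => π.injective h, fun h => by rw [h]⟩
  have hclen : clen (π * σ * π⁻¹) b = clen σ 0 := by
    unfold clen
    by_cases h0 : σ 0 = 0
    · rw [if_pos (hfix.mpr h0), if_pos h0]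
    · rw [if_neg (fun h => h0 (hfix.mp h)), if_neg h0, ← hπ0, cycleOf_conj',
        Perm.card_support_conj]
  unfold Vw
  rw [hoc, hclen]

lemma Arec (u : ℂ) (n : ℕ) :
    Asum u (n + 2) = u * Asum u (n + 1) + ((n : ℂ) + 1) ^ 2 * Asum u n := by
  rw [R1 u (n + 1)]
  congr 1
  have h : ∀ b : Fin (n + 1), ∑ τ : Perm (Fin (n + 1)), Vw u b τ = ((n : ℂ) + 1) * Asum u n := by
    intro b
    rw [R3 u n b, R2 u n]
  rw [Finset.sum_congr rfl (fun b _ => h b), Finset.sum_const, Finset.card_univ,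
    Fintype.card_fin, nsmul_eq_mul]
  push_cast
  ring

lemma Asum_zero (u : ℂ) : Asum u 0 = 1 := by
  have h : (Finset.univ : Finset (Perm (Fin 0))) = {1} := by
    apply Finset.eq_singleton_iff_unique_mem.mpr
    exact ⟨Finset.mem_univ 1, fun σ _ => Equiv.ext fun x => x.elim0⟩
  rw [Asum, h, Finset.sum_singleton]
  unfold oc
  rw [Equiv.Perm.cycleType_one]
  simp

lemma Asum_one (u : ℂ) : Asum u 1 = u := by
  have h : (Finset.univ : Finset (Perm (Fin 1))) = {1} := by
    apply Finset.eq_singleton_iff_unique_mem.mpr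
    exact ⟨Finset.mem_univ 1, fun σ _ => Equiv.ext fun x => Subsingleton.elim _ _⟩
  rw [Asum, h, Finset.sum_singleton]
  unfold oc
  rw [Equiv.Perm.cycleType_one]
  simp

end StmtAux2
end Sums

open Finset in
theorem stmt_2 (S : ℕ → ℂ → ℂ)
    (h0 : ∀ x, S 0 x = 1) (h1 : ∀ x, S 1 x = x)
    (hrec : ∀ n : ℕ, ∀ x, S (n + 2) x = x * S (n + 1) x - ((n : ℂ) + 1) ^ 2 * S n x)
    (cyco : ∀ n : ℕ, Equiv.Perm (Fin n) → ℕ)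
    (hcyco : ∀ n : ℕ, ∀ σ : Equiv.Perm (Fin n),
      cyco n σ = Multiset.card (σ.cycleType.filter (fun m => Odd m)) + (n - σ.cycleType.sum)) :
    ∀ n : ℕ, ∀ x : ℂ, S n x = (-Complex.I) ^ n *
      ∑ σ : Equiv.Perm (Fin n), (Complex.I * x) ^ (cyco n σ) := by
  intro n x
  have hA : ∀ m : ℕ, ∑ σ : Equiv.Perm (Fin m), (Complex.I * x) ^ (cyco m σ)
      = StmtAux2.Asum (Complex.I * x) m := by
    intro m
    unfold StmtAux2.Asum
    apply Finset.sum_congr rfl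
    intro σ _
    rw [hcyco m σ]
    rfl
  rw [hA n]
  have key : ∀ m : ℕ, S m x = (-Complex.I) ^ m * StmtAux2.Asum (Complex.I * x) m ∧
      S (m + 1) x = (-Complex.I) ^ (m + 1) * StmtAux2.Asum (Complex.I * x) (m + 1) := by
    intro m
    induction m with
    | zero =>
      constructor
      · rw [h0, StmtAux2.Asum_zero]
        simp
      · rw [h1, StmtAux2.Asum_one, pow_one]
        rw [← mul_assoc]
        simp [Complex.I_mul_I]
    | succ m ih =>
      refine ⟨ih.2, ?_⟩
      rw [hrec m x, ih.1, ih.2, StmtAux2.Arec]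
      rw [pow_succ, pow_succ]
      linear_combination (-((-Complex.I) ^ m * x * StmtAux2.Asum (Complex.I * x) (m + 1)
          * Complex.I
        + ((m : ℂ) + 1) ^ 2 * (-Complex.I) ^ m * StmtAux2.Asum (Complex.I * x) m))
        * Complex.I_mul_I
  exact (key n).1
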